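/- For every m ≥ 1 there exists k ∈ ℕ (depending only on m) such that for every pair of groups Γ, G, every map f : Γ → G, and all y₁, …, y_m, z₁, …, z_m ∈ Γ, one has f(y₁ z₁⁻¹ y₂ z₂⁻¹ ⋯ y_m z_m⁻¹) ∈ f(y₁) f(z₁)⁻¹ f(y₂) f(z₂)⁻¹ ⋯ f(y_m) f(z_m)⁻¹ (D_f ∪ D_f⁻¹)ᵏ, where D_f is the defect set of f. -/

import Mathlib

open scoped Pointwise

universe u v

/-- The defect set of a map `f : Γ → G`:
`D_f = { f(y)⁻¹ f(x)⁻¹ f(xy) : x, y ∈ Γ }`. -/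
def defectSet {Γ G : Type*} [Group Γ] [Group G] (f : Γ → G) : Set G :=
  {d | ∃ x y : Γ, d = (f y)⁻¹ * (f x)⁻¹ * f (x * y)}

/-- symmetrized defect set -/
def symD {Γ G : Type*} [Group Γ] [Group G] (f : Γ → G) : Set G :=
  defectSet f ∪ (defectSet f)⁻¹

/-- the exponent -/
def kfun : ℕ → ℕ
  | 0 => 1
  | n + 1 => 7 ^ (2 * n) * 3 + kfun n + 1

section Helpers

variable {Γ : Type u} {G : Type v} [Group Γ] [Group G] (f : Γ → G)

lemma mem_defect (x y : Γ) : (f y)⁻¹ * (f x)⁻¹ * f (x * y) ∈ defectSet f := ⟨x, y, rfl⟩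

lemma mem_symD_of_defect {d : G} (h : d ∈ defectSet f) : d ∈ symD f := Or.inl h

lemma symD_inv_mem {d : G} (h : d ∈ symD f) : d⁻¹ ∈ symD f := by
  rcases h with h | h
  · exact Or.inr (by simpa [Set.mem_inv] using h)
  · exact Or.inl (by simpa [Set.mem_inv] using h)

lemma pow_mem_mul {a b : G} {m n : ℕ} (ha : a ∈ symD f ^ m) (hb : b ∈ symD f ^ n) :
    a * b ∈ symD f ^ (m + n) := by
  rw [pow_add]; exact Set.mul_mem_mul ha hb

lemma mem_pow_one {a : G} (ha : a ∈ symD f) : a ∈ symD f ^ 1 := by rwa [pow_one]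

lemma inv_mem_pow {a : G} {n : ℕ} (ha : a ∈ symD f ^ n) : a⁻¹ ∈ symD f ^ n := by
  induction n generalizing a with
  | zero => simp only [pow_zero, Set.mem_one] at ha ⊢; simp [ha]
  | succ n ih =>
    rw [pow_succ] at ha
    rcases ha with ⟨b, hb, s, hs, rfl⟩
    rw [mul_inv_rev]
    have : s⁻¹ * b⁻¹ ∈ symD f ^ (1 + n) :=
      pow_mem_mul f (mem_pow_one f (symD_inv_mem f hs)) (ih hb)
    rwa [add_comm] at this

lemma f_one_inv_mem : (f 1)⁻¹ ∈ defectSet f :=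
  ⟨1, 1, by rw [one_mul]; group⟩

lemma f_one_mem : f 1 ∈ symD f :=
  Or.inr (by simpa [Set.mem_inv] using f_one_inv_mem f)

lemma pad2 {a : G} {n : ℕ} (ha : a ∈ symD f ^ n) : a ∈ symD f ^ (n + 2) := by
  have h2 : (f 1)⁻¹ * f 1 ∈ symD f ^ 2 := by
    rw [sq]
    exact Set.mul_mem_mul (mem_symD_of_defect f (f_one_inv_mem f)) (f_one_mem f)
  have := pow_mem_mul f ha h2
  simpa using this

lemma mul_eq (x y : Γ) : ∃ d ∈ symD f, f (x * y) = f x * f y * d :=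
  ⟨(f y)⁻¹ * (f x)⁻¹ * f (x * y), mem_symD_of_defect f (mem_defect f x y), by group⟩

lemma inv_eq (g : Γ) : ∃ c ∈ symD f ^ 2, (f g)⁻¹ = f g⁻¹ * c := by
  refine ⟨((f g⁻¹)⁻¹ * (f g)⁻¹ * f (g * g⁻¹)) * (f 1)⁻¹, ?_, ?_⟩
  · rw [sq]
    exact Set.mul_mem_mul (mem_symD_of_defect f (mem_defect f g g⁻¹))
      (mem_symD_of_defect f (f_one_inv_mem f))
  · rw [mul_inv_cancel]; group

lemma conjF_D {d : G} (hd : d ∈ defectSet f) (g : Γ) :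
    (f g)⁻¹ * d * f g ∈ symD f ^ 3 := by
  rcases hd with ⟨x, y, rfl⟩
  have key : (f g)⁻¹ * ((f y)⁻¹ * (f x)⁻¹ * f (x * y)) * f g =
      ((f g)⁻¹ * (f y)⁻¹ * f (y * g)) *
        ((f (y * g))⁻¹ * (f x)⁻¹ * f (x * (y * g))) *
        ((f g)⁻¹ * (f (x * y))⁻¹ * f (x * y * g))⁻¹ := by
    rw [show x * (y * g) = x * y * g by group]; group
  rw [key]
  have h1 : (f g)⁻¹ * (f y)⁻¹ * f (y * g) ∈ symD f := mem_symD_of_defect f (mem_defect f y g)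
  have h2 : (f (y * g))⁻¹ * (f x)⁻¹ * f (x * (y * g)) ∈ symD f :=
    mem_symD_of_defect f (mem_defect f x (y * g))
  have h3 : ((f g)⁻¹ * (f (x * y))⁻¹ * f (x * y * g))⁻¹ ∈ symD f :=
    symD_inv_mem f (mem_symD_of_defect f (mem_defect f (x * y) g))
  have := pow_mem_mul f (pow_mem_mul f (mem_pow_one f h1) (mem_pow_one f h2)) (mem_pow_one f h3)
  simpa using this

lemma conjF {d : G} (hd : d ∈ symD f) (g : Γ) :
    (f g)⁻¹ * d * f g ∈ symD f ^ 3 := by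
  rcases hd with hd | hd
  · exact conjF_D f hd g
  · have hd' : d⁻¹ ∈ defectSet f := by simpa [Set.mem_inv] using hd
    have := inv_mem_pow f (conjF_D f hd' g)
    have heq : ((f g)⁻¹ * d⁻¹ * f g)⁻¹ = (f g)⁻¹ * d * f g := by group
    rwa [heq] at this

/-- A letter is a value of `f` or an inverse of one. -/
def IsLetter (a : G) : Prop := ∃ g : Γ, a = f g ∨ a = (f g)⁻¹

lemma conjLetter {a : G} (ha : IsLetter f a) {d : G} (hd : d ∈ symD f) :
    a⁻¹ * d * a ∈ symD f ^ 7 := by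
  rcases ha with ⟨g, hg | hg⟩
  · subst hg
    exact pad2 f (pad2 f (conjF f hd g))
  · subst hg
    obtain ⟨c, hc, hceq⟩ := inv_eq f g
    have key : ((f g)⁻¹)⁻¹ * d * (f g)⁻¹ =
        c⁻¹ * ((f g⁻¹)⁻¹ * d * f g⁻¹) * c := by
      rw [hceq]; group
    rw [key]
    exact pow_mem_mul f (pow_mem_mul f (inv_mem_pow f hc) (conjF f hd g⁻¹)) hc

lemma conjPow {a : G} (ha : IsLetter f a) {n : ℕ} {d : G} (hd : d ∈ symD f ^ n) :
    a⁻¹ * d * a ∈ symD f ^ (7 * n) := by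
  induction n generalizing d with
  | zero =>
    simp only [pow_zero, Set.mem_one] at hd ⊢
    subst hd; simp [Nat.mul_zero]
  | succ n ih =>
    rw [pow_succ] at hd
    rcases hd with ⟨b, hb, s, hs, rfl⟩
    have key : a⁻¹ * (b * s) * a = (a⁻¹ * b * a) * (a⁻¹ * s * a) := by group
    rw [key, Nat.mul_succ]
    exact pow_mem_mul f (ih hb) (conjLetter f ha hs)

lemma conjQ (L : List (Γ × Γ)) {n : ℕ} {d : G} (hd : d ∈ symD f ^ n) :
    ((L.map fun p => f p.1 * (f p.2)⁻¹).prod)⁻¹ * d *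
      (L.map fun p => f p.1 * (f p.2)⁻¹).prod ∈ symD f ^ (7 ^ (2 * L.length) * n) := by
  induction L generalizing n d with
  | nil => simpa using hd
  | cons p L ih =>
    simp only [List.map_cons, List.prod_cons, List.length_cons]
    have h1 : (f p.1)⁻¹ * d * f p.1 ∈ symD f ^ (7 * n) :=
      conjPow f ⟨p.1, Or.inl rfl⟩ hd
    have h2 : ((f p.2)⁻¹)⁻¹ * ((f p.1)⁻¹ * d * f p.1) * (f p.2)⁻¹ ∈ symD f ^ (7 * (7 * n)) :=
      conjPow f ⟨p.2, Or.inr rfl⟩ h1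
    have h3 := ih h2
    have hexp : 7 ^ (2 * L.length) * (7 * (7 * n)) = 7 ^ (2 * (L.length + 1)) * n := by ring
    rw [hexp] at h3
    have key : (f p.1 * (f p.2)⁻¹ * (L.map fun p => f p.1 * (f p.2)⁻¹).prod)⁻¹ * d *
        (f p.1 * (f p.2)⁻¹ * (L.map fun p => f p.1 * (f p.2)⁻¹).prod) =
        ((L.map fun p => f p.1 * (f p.2)⁻¹).prod)⁻¹ *
          (((f p.2)⁻¹)⁻¹ * ((f p.1)⁻¹ * d * f p.1) * (f p.2)⁻¹) *
          (L.map fun p => f p.1 * (f p.2)⁻¹).prod := by group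
    rw [key]
    exact h3

lemma pair_eq (y z : Γ) : ∃ e ∈ symD f ^ 3, f (y * z⁻¹) = f y * (f z)⁻¹ * e := by
  obtain ⟨d₁, hd₁, h₁⟩ := mul_eq f y z⁻¹
  obtain ⟨c, hc, hceq⟩ := inv_eq f z
  refine ⟨c⁻¹ * d₁, ?_, ?_⟩
  · have := pow_mem_mul f (inv_mem_pow f hc) (mem_pow_one f hd₁)
    simpa using this
  · have hz : f z⁻¹ = (f z)⁻¹ * c⁻¹ := by rw [hceq]; group
    rw [h₁, hz]; group

lemma mainList (L : List (Γ × Γ)) :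
    ∃ d ∈ symD f ^ kfun L.length,
      f ((L.map fun p => p.1 * p.2⁻¹).prod) = (L.map fun p => f p.1 * (f p.2)⁻¹).prod * d := by
  induction L with
  | nil =>
    refine ⟨f 1, ?_, by simp⟩
    simpa [kfun] using mem_pow_one f (f_one_mem f)
  | cons p L ih =>
    obtain ⟨c, hc, h₃⟩ := ih
    obtain ⟨e, he, h₂⟩ := pair_eq f p.1 p.2
    obtain ⟨d₁, hd₁, h₁⟩ := mul_eq f (p.1 * p.2⁻¹) ((L.map fun q => q.1 * q.2⁻¹).prod)
    set Q := (L.map fun q => f q.1 * (f q.2)⁻¹).prod with hQ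
    refine ⟨(Q⁻¹ * e * Q) * c * d₁, ?_, ?_⟩
    · have hm1 : Q⁻¹ * e * Q ∈ symD f ^ (7 ^ (2 * L.length) * 3) := conjQ f L he
      have := pow_mem_mul f (pow_mem_mul f hm1 hc) (mem_pow_one f hd₁)
      simpa [kfun, List.length_cons] using this
    · simp only [List.map_cons, List.prod_cons]
      rw [h₁, h₂, h₃, ← hQ]
      group

end Helpers

/-- For every `m ≥ 1` there is `k ∈ ℕ`, depending only on `m`, such that for any map
`f : Γ → G` between groups and any `y₁, …, y_m, z₁, …, z_m ∈ Γ`,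
`f(y₁ z₁⁻¹ ⋯ y_m z_m⁻¹) ∈ f(y₁) f(z₁)⁻¹ ⋯ f(y_m) f(z_m)⁻¹ (D_f ∪ D_f⁻¹)ᵏ`. -/
theorem long_product (m : ℕ) (hm : 1 ≤ m) :
    ∃ k : ℕ, ∀ (Γ : Type u) (G : Type v) [Group Γ] [Group G] (f : Γ → G)
      (y z : Fin m → Γ),
      ∃ d ∈ (defectSet f ∪ (defectSet f)⁻¹) ^ k,
        f ((List.ofFn fun i => y i * (z i)⁻¹).prod) =
          (List.ofFn fun i => f (y i) * (f (z i))⁻¹).prod * d := by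
  refine ⟨kfun m, fun Γ G _ _ f y z => ?_⟩
  obtain ⟨d, hd, heq⟩ := mainList f (List.ofFn fun i => (y i, z i))
  refine ⟨d, ?_, ?_⟩
  · simpa [symD, List.length_ofFn] using hd
  · simpa [List.map_ofFn, Function.comp_def] using heq
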